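/- Let 1 ≤ k ≤ n−1. Then the map Γ_k : D_k → 𝖦_k defined by x ↦ rng(x) and the map Δ_k : D_k → 𝖦_{n−k} defined by x ↦ nul(x) are both continuous open surjections. -/

import Mathlib

open Matrix

/-- `Mn n` is the multiplicative monoid of `n × n` complex matrices. -/
abbrev Mn (n : ℕ) : Type := Matrix (Fin n) (Fin n) ℂ

/-- A subset of `Mn n` is algebraic if it is the common zero set of a family of
polynomials in the `n²` matrix entries. -/
def IsAlgebraicMatrixSet {n : ℕ} (X : Set (Mn n)) : Prop :=
  ∃ s : Set (MvPolynomial (Fin n × Fin n) ℂ),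
    X = {x | ∀ p ∈ s, MvPolynomial.eval (fun ij => x ij.1 ij.2) p = 0}

/-- `M` is a regular irreducible algebraic monoid in `Mn n`. -/
structure IsRegIrrAlgMonoid {n : ℕ} (M : Set (Mn n)) : Prop where
  one_mem : (1 : Mn n) ∈ M
  mul_mem : ∀ a ∈ M, ∀ b ∈ M, a * b ∈ M
  algebraic : IsAlgebraicMatrixSet M
  regular : ∀ a ∈ M, ∃ x ∈ M, a * x * a = a
  irreducible : ¬ ∃ A B : Set (Mn n), IsAlgebraicMatrixSet A ∧ IsAlgebraicMatrixSet B ∧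
      A ∪ B = M ∧ A ≠ M ∧ B ≠ M

/-- The group of units of the monoid `M` (as a subset of `Mn n`). -/
def unitsOf {n : ℕ} (M : Set (Mn n)) : Set (Mn n) :=
  {u | u ∈ M ∧ ∃ v ∈ M, u * v = 1 ∧ v * u = 1}

def lSet {n : ℕ} (S : Set (Mn n)) (a : Mn n) : Set (Mn n) := {y | ∃ x ∈ S, y = x * a}
def rSet {n : ℕ} (S : Set (Mn n)) (a : Mn n) : Set (Mn n) := {y | ∃ x ∈ S, y = a * x}
def jSet {n : ℕ} (S : Set (Mn n)) (a : Mn n) : Set (Mn n) :=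
  {y | ∃ x ∈ S, ∃ z ∈ S, y = x * a * z}

/-- Green's relation 𝓛 in the monoid `S`: `a 𝓛 b` iff `Sa = Sb`. -/
def GreenL {n : ℕ} (S : Set (Mn n)) (a b : Mn n) : Prop := lSet S a = lSet S b
/-- Green's relation 𝓡 in the monoid `S`: `a 𝓡 b` iff `aS = bS`. -/
def GreenR {n : ℕ} (S : Set (Mn n)) (a b : Mn n) : Prop := rSet S a = rSet S b
/-- Green's relation 𝓓: `a 𝓓 b` iff there is `c ∈ S` with `a 𝓛 c` and `c 𝓡 b`. -/
def GreenD {n : ℕ} (S : Set (Mn n)) (a b : Mn n) : Prop :=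
  ∃ c ∈ S, GreenL S a c ∧ GreenR S c b
/-- Green's relation 𝓙: `a 𝓙 b` iff `SaS = SbS`. -/
def GreenJ {n : ℕ} (S : Set (Mn n)) (a b : Mn n) : Prop := jSet S a = jSet S b

def LClass {n : ℕ} (S : Set (Mn n)) (a : Mn n) : Set (Mn n) := {b ∈ S | GreenL S a b}
def RClass {n : ℕ} (S : Set (Mn n)) (a : Mn n) : Set (Mn n) := {b ∈ S | GreenR S a b}
def DClass {n : ℕ} (S : Set (Mn n)) (a : Mn n) : Set (Mn n) := {b ∈ S | GreenD S a b}
def JClass {n : ℕ} (S : Set (Mn n)) (a : Mn n) : Set (Mn n) := {b ∈ S | GreenJ S a b}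

/-- The set of idempotents in a subset `T`. -/
def idem {n : ℕ} (T : Set (Mn n)) : Set (Mn n) := {x ∈ T | x * x = x}

/-- `rng x` : the row space of `x`, i.e. the image of the linear map `v ↦ v ᵥ* x`
on row vectors (equivalently, the range of `xᵀ *ᵥ ·`). -/
noncomputable def rng {n : ℕ} (x : Mn n) : Submodule ℂ (Fin n → ℂ) :=
  LinearMap.range xᵀ.mulVecLin

/-- `nul x` : the left null space `{v : v ᵥ* x = 0}` of `x`. -/
noncomputable def nul {n : ℕ} (x : Mn n) : Submodule ℂ (Fin n → ℂ) :=
  LinearMap.ker xᵀ.mulVecLin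

/-- The row space of a `k × n` matrix `P`: the span of its rows, i.e. the image of
the linear map `v ↦ v ᵥ* P` (equivalently `v ↦ Pᵀ *ᵥ v`). -/
noncomputable def rowSpace {k n : ℕ} (P : Matrix (Fin k) (Fin n) ℂ) : Submodule ℂ (Fin n → ℂ) :=
  LinearMap.range Pᵀ.mulVecLin

/-- Type synonym for the submodule lattice of `ℂⁿ`; the parameter `k` records which
Grassmann quotient topology (coinduced from the rank-`k` `k × n` matrices via the
row-space map) the type carries. -/
def GrassModK (n k : ℕ) : Type := Submodule ℂ (Fin n → ℂ)

def toGrass {n : ℕ} (k : ℕ) (W : Submodule ℂ (Fin n → ℂ)) : GrassModK n k := W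

def toSubmodule {n k : ℕ} (W : GrassModK n k) : Submodule ℂ (Fin n → ℂ) := W

/-- The Grassmann (quotient) topology: coinduced from the euclidean topology on the
space `M(k,n;k)` of rank-`k` `k × n` matrices by the row-space map `q`. -/
noncomputable instance grassTop (n k : ℕ) : TopologicalSpace (GrassModK n k) :=
  TopologicalSpace.coinduced
    (fun P : {P : Matrix (Fin k) (Fin n) ℂ // P.rank = k} => toGrass k (rowSpace P.1))
    inferInstance

/-- `𝖦_k`, the set of `k`-dimensional subspaces of `ℂⁿ` (in its Grassmann-topologised
ambient type); it carries the subspace topology, which agrees with the quotient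
topology induced by `q`. -/
def GrassSet (n k : ℕ) : Set (GrassModK n k) :=
  {W | Module.finrank ℂ ↥(toSubmodule W) = k}

section GrassAux
open Matrix Module Submodule Set
open scoped ComplexOrder

-- rowSpace basics
lemma rowSpace_eq_span {a n : ℕ} (P : Matrix (Fin a) (Fin n) ℂ) :
    rowSpace P = span ℂ (range P) := by
  rw [rowSpace, Matrix.range_mulVecLin]; rfl

lemma finrank_rowSpace {a n : ℕ} (P : Matrix (Fin a) (Fin n) ℂ) :
    finrank ℂ ↥(rowSpace P) = P.rank := by
  rw [rowSpace, show finrank ℂ ↥(LinearMap.range Pᵀ.mulVecLin) = Pᵀ.rank from rfl,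
    Matrix.rank_transpose]

lemma row_mem_rowSpace {a n : ℕ} (P : Matrix (Fin a) (Fin n) ℂ) (i : Fin a) :
    P i ∈ rowSpace P := by
  rw [rowSpace_eq_span]
  exact subset_span ⟨i, rfl⟩

lemma rank_add_finrank_ker {a n : ℕ} (P : Matrix (Fin a) (Fin n) ℂ) :
    P.rank + finrank ℂ ↥(LinearMap.ker P.mulVecLin) = n := by
  have h := LinearMap.finrank_range_add_finrank_ker P.mulVecLin
  rwa [Module.finrank_fintype_fun_eq_card, Fintype.card_fin] at h

lemma rank_add_finrank_nul {n : ℕ} (x : Mn n) :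
    x.rank + finrank ℂ ↥(nul x) = n := by
  have h := rank_add_finrank_ker xᵀ
  rwa [Matrix.rank_transpose] at h

lemma rowSpace_mul_le {a b n : ℕ} (C : Matrix (Fin a) (Fin b) ℂ) (P : Matrix (Fin b) (Fin n) ℂ) :
    rowSpace (C * P) ≤ rowSpace P := by
  rw [rowSpace, rowSpace, transpose_mul, Matrix.mulVecLin_mul]
  exact LinearMap.range_comp_le_range _ _

lemma range_le_ker_of_mul_eq_zero {a b n : ℕ} {P : Matrix (Fin a) (Fin n) ℂ}
    {V : Matrix (Fin n) (Fin b) ℂ} (h : P * V = 0) :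
    LinearMap.range V.mulVecLin ≤ LinearMap.ker P.mulVecLin := by
  rw [LinearMap.range_le_ker_iff, ← Matrix.mulVecLin_mul, h, Matrix.mulVecLin_zero]

lemma rowSpace_le_nul {a n : ℕ} {P : Matrix (Fin a) (Fin n) ℂ} {x : Mn n}
    (h : P * x = 0) : rowSpace P ≤ nul x := by
  rw [rowSpace]
  apply range_le_ker_of_mul_eq_zero
  rw [← transpose_mul, h, transpose_zero]

lemma mul_eq_zero_of_rowSpace_le_nul {a n : ℕ} {P : Matrix (Fin a) (Fin n) ℂ}
    {x : Mn n} (h : rowSpace P ≤ nul x) :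
    P * x = 0 := by
  ext i j
  have h1 : xᵀ *ᵥ P i = 0 := h (row_mem_rowSpace P i)
  have h2 := congrFun h1 j
  simp only [Matrix.mulVec, dotProduct, transpose_apply, Pi.zero_apply] at h2
  simp only [Matrix.mul_apply, Matrix.zero_apply]
  rw [← h2]
  exact Finset.sum_congr rfl fun l _ => mul_comm _ _

lemma rank_add_le' {a b : ℕ} (M N : Matrix (Fin a) (Fin b) ℂ) :
    (M + N).rank ≤ M.rank + N.rank := by
  have h : LinearMap.range (M + N).mulVecLin ≤
      LinearMap.range M.mulVecLin ⊔ LinearMap.range N.mulVecLin := by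
    rintro _ ⟨v, rfl⟩
    rw [Matrix.mulVecLin_add]
    exact Submodule.mem_sup.mpr ⟨M.mulVecLin v, ⟨v, rfl⟩, N.mulVecLin v, ⟨v, rfl⟩, rfl⟩
  calc (M + N).rank = finrank ℂ ↥(LinearMap.range (M + N).mulVecLin) := rfl
    _ ≤ finrank ℂ ↥(LinearMap.range M.mulVecLin ⊔ LinearMap.range N.mulVecLin) :=
        Submodule.finrank_mono h
    _ ≤ M.rank + N.rank := Submodule.finrank_add_le_finrank_add_finrank _ _

lemma isUnit_of_rank_eq {r : ℕ} {M : Matrix (Fin r) (Fin r) ℂ} (h : M.rank = r) : IsUnit M := by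
  have htop : LinearMap.range M.mulVecLin = ⊤ := by
    apply Submodule.eq_top_of_finrank_eq
    rw [Module.finrank_fintype_fun_eq_card, Fintype.card_fin]
    exact h
  apply Matrix.mulVec_surjective_iff_isUnit.mp
  intro v
  obtain ⟨w, hw⟩ := LinearMap.range_eq_top.mp htop v
  exact ⟨w, hw⟩

lemma col_mem_range_mulVecLin {a b : ℕ} (y : Matrix (Fin a) (Fin b) ℂ) (j : Fin b) :
    yᵀ j ∈ LinearMap.range y.mulVecLin :=
  ⟨Pi.single j 1, by ext i; simp [Matrix.mulVecLin_apply, Matrix.mulVec_single]⟩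

lemma exists_factor {a b c : ℕ} {y : Matrix (Fin a) (Fin b) ℂ} {z : Matrix (Fin a) (Fin c) ℂ}
    (h : LinearMap.range y.mulVecLin ≤ LinearMap.range z.mulVecLin) :
    ∃ E : Matrix (Fin c) (Fin b) ℂ, y = z * E := by
  have hcol : ∀ j : Fin b, ∃ e : Fin c → ℂ, z *ᵥ e = yᵀ j := by
    intro j
    obtain ⟨e, he⟩ := h (col_mem_range_mulVecLin y j)
    exact ⟨e, he⟩
  choose e he using hcol
  refine ⟨Matrix.of fun i j => e j i, ?_⟩
  ext i j
  have := congrFun (he j) i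
  simp only [Matrix.mulVec, dotProduct, transpose_apply] at this
  rw [Matrix.mul_apply, ← this]
  rfl

lemma le_rank_of_isUnit {a b r : ℕ} {y : Matrix (Fin a) (Fin b) ℂ}
    {A : Matrix (Fin r) (Fin a) ℂ} {B : Matrix (Fin b) (Fin r) ℂ}
    (h : IsUnit (A * y * B)) : r ≤ y.rank := by
  have h1 : (A * y * B).rank = r := by
    rw [Matrix.rank_of_isUnit _ h, Fintype.card_fin]
  calc r = (A * y * B).rank := h1.symm
    _ = (A * (y * B)).rank := by rw [Matrix.mul_assoc]
    _ ≤ (y * B).rank := Matrix.rank_mul_le_right _ _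
    _ ≤ y.rank := Matrix.rank_mul_le_left _ _

lemma exists_isUnit_mul_mul {a b r : ℕ} {y : Matrix (Fin a) (Fin b) ℂ} (h : r ≤ y.rank) :
    ∃ (A : Matrix (Fin r) (Fin a) ℂ) (B : Matrix (Fin b) (Fin r) ℂ), IsUnit (A * y * B) := by
  classical
  have hfd : FiniteDimensional ℂ ↥(LinearMap.range y.mulVecLin) := inferInstance
  let bas := Module.finBasis ℂ ↥(LinearMap.range y.mulVecLin)
  have hcard : r ≤ finrank ℂ ↥(LinearMap.range y.mulVecLin) := h
  let w : Fin r → (Fin a → ℂ) := fun i => (bas (Fin.castLE hcard i) : Fin a → ℂ)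
  have hw : LinearIndependent ℂ w := by
    have h1 : LinearIndependent ℂ
        (fun i => ((bas i : ↥(LinearMap.range y.mulVecLin)) : Fin a → ℂ)) :=
      bas.linearIndependent.map' (LinearMap.range y.mulVecLin).subtype
        (Submodule.ker_subtype _)
    exact h1.comp (Fin.castLE hcard) (Fin.castLE_injective hcard)
  have hmem : ∀ i, w i ∈ LinearMap.range y.mulVecLin := fun i => (bas _).2
  choose c hc using hmem
  set B : Matrix (Fin b) (Fin r) ℂ := Matrix.of fun j i => c i j with hB
  have hyB : (y * B)ᵀ = Matrix.of w := by
    ext i l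
    have := congrFun (hc i) l
    simp only [Matrix.mulVecLin_apply, Matrix.mulVec, dotProduct] at this
    simp only [transpose_apply, Matrix.mul_apply, Matrix.of_apply]
    rw [← this]
    rfl
  have hrankyB : (y * B).rank = r := by
    have h1 : ((y * B)ᵀ).rank = r := by
      rw [hyB]
      have hli : LinearIndependent ℂ (Matrix.of w : Matrix (Fin r) (Fin a) ℂ) := hw
      rw [hli.rank_matrix, Fintype.card_fin]
    rw [← Matrix.rank_transpose]
    exact h1
  refine ⟨(y * B)ᴴ, B, ?_⟩
  have h2 : (y * B)ᴴ * y * B = (y * B)ᴴ * (y * B) := by rw [Matrix.mul_assoc]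
  rw [h2]
  exact isUnit_of_rank_eq (by rw [Matrix.rank_conjTranspose_mul_self]; exact hrankyB)

lemma isOpen_le_rank {a b r : ℕ} : IsOpen {y : Matrix (Fin a) (Fin b) ℂ | r ≤ y.rank} := by
  have heq : {y : Matrix (Fin a) (Fin b) ℂ | r ≤ y.rank} =
      ⋃ (A : Matrix (Fin r) (Fin a) ℂ) (B : Matrix (Fin b) (Fin r) ℂ),
        {y | (A * y * B).det ≠ 0} := by
    ext y
    simp only [mem_setOf_eq, mem_iUnion]
    constructor
    · intro hy
      obtain ⟨A, B, hAB⟩ := exists_isUnit_mul_mul hy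
      exact ⟨A, B, isUnit_iff_ne_zero.mp ((Matrix.isUnit_iff_isUnit_det _).mp hAB)⟩
    · rintro ⟨A, B, hAB⟩
      exact le_rank_of_isUnit ((Matrix.isUnit_iff_isUnit_det _).mpr (isUnit_iff_ne_zero.mpr hAB))
  rw [heq]
  apply isOpen_iUnion; intro A
  apply isOpen_iUnion; intro B
  have hc : Continuous fun y : Matrix (Fin a) (Fin b) ℂ => (A * y * B).det :=
    ((continuous_const.matrix_mul continuous_id).matrix_mul continuous_const).matrix_det
  exact IsOpen.preimage hc isOpen_compl_singleton

lemma geninv {a b r : ℕ} {y : Matrix (Fin a) (Fin b) ℂ} {A : Matrix (Fin r) (Fin a) ℂ}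
    {B : Matrix (Fin b) (Fin r) ℂ} (hy : y.rank ≤ r) (h : IsUnit (A * y * B)) :
    y * (B * (A * y * B)⁻¹ * A) * y = y := by
  have hu : IsUnit (A * y * B).det := (Matrix.isUnit_iff_isUnit_det _).mp h
  have hle : LinearMap.range (y * B).mulVecLin ≤ LinearMap.range y.mulVecLin := by
    rw [Matrix.mulVecLin_mul]
    exact LinearMap.range_comp_le_range _ _
  have hrank : (y * B).rank = y.rank := by
    have h1 : r ≤ (y * B).rank := by
      calc r = (A * y * B).rank := by rw [Matrix.rank_of_isUnit _ h, Fintype.card_fin]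
        _ = (A * (y * B)).rank := by rw [Matrix.mul_assoc]
        _ ≤ (y * B).rank := Matrix.rank_mul_le_right _ _
    have h2 : (y * B).rank ≤ y.rank := Matrix.rank_mul_le_left _ _
    omega
  have heq : LinearMap.range (y * B).mulVecLin = LinearMap.range y.mulVecLin :=
    Submodule.eq_of_le_of_finrank_eq hle hrank
  obtain ⟨E, hE⟩ := exists_factor (le_of_eq heq.symm)
  have hAy : A * y = A * y * B * E := by
    conv_lhs => rw [hE]
    simp only [Matrix.mul_assoc]
  have hkey : (A * y * B)⁻¹ * (A * y) = E := by
    set M := (A * y * B)⁻¹ with hM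
    rw [hAy, ← Matrix.mul_assoc M, hM, Matrix.nonsing_inv_mul _ hu, Matrix.one_mul]
  calc y * (B * (A * y * B)⁻¹ * A) * y
      = (y * B) * ((A * y * B)⁻¹ * (A * y)) := by
        simp only [Matrix.mul_assoc]
    _ = (y * B) * E := by rw [hkey]
    _ = y := hE.symm

lemma exists_rowSpace_eq {m n : ℕ} (W : Submodule ℂ (Fin n → ℂ)) (h : finrank ℂ ↥W = m) :
    ∃ P : Matrix (Fin m) (Fin n) ℂ, rowSpace P = W ∧ P.rank = m := by
  classical
  let b : Basis (Fin m) ℂ ↥W := Module.finBasisOfFinrankEq ℂ ↥W h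
  have hr : range (Matrix.of fun i => (b i : Fin n → ℂ)) = W.subtype '' (range b) := by
    ext v
    simp only [Set.mem_range, Set.mem_image, Matrix.of_apply]
    constructor
    · rintro ⟨i, rfl⟩; exact ⟨b i, ⟨i, rfl⟩, rfl⟩
    · rintro ⟨w, ⟨i, rfl⟩, rfl⟩; exact ⟨i, rfl⟩
  have hrs : rowSpace (Matrix.of fun i => (b i : Fin n → ℂ)) = W := by
    rw [rowSpace_eq_span, hr, ← Submodule.map_span, b.span_eq, Submodule.map_subtype_top]
  refine ⟨Matrix.of fun i => (b i : Fin n → ℂ), hrs, ?_⟩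
  have h1 := finrank_rowSpace (Matrix.of fun i => (b i : Fin n → ℂ))
  rw [← h1, hrs]
  exact h

lemma exists_isUnit_mul_right {m n : ℕ} {P : Matrix (Fin m) (Fin n) ℂ} (hP : P.rank = m) :
    ∃ B₂ : Matrix (Fin n) (Fin m) ℂ, IsUnit ((P * B₂).det) := by
  obtain ⟨A₂, B₂, h⟩ := exists_isUnit_mul_mul (le_of_eq hP.symm)
  refine ⟨B₂, (Matrix.isUnit_iff_isUnit_det _).mp (isUnit_of_rank_eq ?_)⟩
  have h1 : m ≤ (P * B₂).rank := by
    calc m = (A₂ * P * B₂).rank := by rw [Matrix.rank_of_isUnit _ h, Fintype.card_fin]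
      _ = (A₂ * (P * B₂)).rank := by rw [Matrix.mul_assoc]
      _ ≤ (P * B₂).rank := Matrix.rank_mul_le_right _ _
  have h2 : (P * B₂).rank ≤ m := by
    have := Matrix.rank_le_card_width (P * B₂)
    rwa [Fintype.card_fin] at this
  omega

/-- Key properties of the "kernel projector" `V = 1 - B₂ (P B₂)⁻¹ P`. -/
lemma kerProj {m n : ℕ} {P : Matrix (Fin m) (Fin n) ℂ} {B₂ : Matrix (Fin n) (Fin m) ℂ}
    (hP : P.rank = m) (hu : IsUnit ((P * B₂).det)) :
    P * (1 - B₂ * (P * B₂)⁻¹ * P) = 0 ∧ (1 - B₂ * (P * B₂)⁻¹ * P).rank = n - m ∧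
      LinearMap.range (1 - B₂ * (P * B₂)⁻¹ * P).mulVecLin = LinearMap.ker P.mulVecLin := by
  set V : Matrix (Fin n) (Fin n) ℂ := 1 - B₂ * (P * B₂)⁻¹ * P with hV
  have hPV : P * V = 0 := by
    have h1 : P * (B₂ * (P * B₂)⁻¹ * P) = P := by
      rw [← Matrix.mul_assoc, ← Matrix.mul_assoc, Matrix.mul_nonsing_inv _ hu, Matrix.one_mul]
    rw [hV, Matrix.mul_sub, Matrix.mul_one, h1, sub_self]
  have hker : P.rank + finrank ℂ ↥(LinearMap.ker P.mulVecLin) = n := rank_add_finrank_ker P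
  have hmn : m ≤ n := by
    have := Matrix.rank_le_card_width P
    rw [Fintype.card_fin] at this
    omega
  have hkerdim : finrank ℂ ↥(LinearMap.ker P.mulVecLin) = n - m := by omega
  have hle : LinearMap.range V.mulVecLin ≤ LinearMap.ker P.mulVecLin :=
    range_le_ker_of_mul_eq_zero hPV
  have hrankV : V.rank = n - m := by
    have hge : n - m ≤ V.rank := by
      have hone : (1 : Matrix (Fin n) (Fin n) ℂ) = V + B₂ * (P * B₂)⁻¹ * P := by
        rw [hV, sub_add_cancel]
      have hsmall : (B₂ * (P * B₂)⁻¹ * P).rank ≤ m := by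
        calc (B₂ * (P * B₂)⁻¹ * P).rank ≤ (B₂ * (P * B₂)⁻¹).rank :=
              Matrix.rank_mul_le_left _ _
          _ ≤ B₂.rank := Matrix.rank_mul_le_left _ _
          _ ≤ m := by have := Matrix.rank_le_card_width B₂; rwa [Fintype.card_fin] at this
      have hsum : n ≤ V.rank + (B₂ * (P * B₂)⁻¹ * P).rank := by
        have h1 : (1 : Matrix (Fin n) (Fin n) ℂ).rank = n := by
          rw [Matrix.rank_one, Fintype.card_fin]
        calc n = (1 : Matrix (Fin n) (Fin n) ℂ).rank := h1.symm
          _ = (V + B₂ * (P * B₂)⁻¹ * P).rank := by rw [← hone]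
          _ ≤ V.rank + (B₂ * (P * B₂)⁻¹ * P).rank := rank_add_le' _ _
      omega
    have hle2 : V.rank ≤ n - m := by
      calc V.rank = finrank ℂ ↥(LinearMap.range V.mulVecLin) := rfl
        _ ≤ finrank ℂ ↥(LinearMap.ker P.mulVecLin) := Submodule.finrank_mono hle
        _ = n - m := hkerdim
    omega
  exact ⟨hPV, hrankV,
    Submodule.eq_of_le_of_finrank_eq hle (by rw [hkerdim]; exact hrankV)⟩

/-- On the set where `A*x*B` is invertible, `A*x` has rank `k` and the same row space as `x`. -/
lemma rowComp {k n : ℕ} {A : Matrix (Fin k) (Fin n) ℂ} {B : Matrix (Fin n) (Fin k) ℂ}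
    {x : Mn n} (hx : x.rank = k) (hu : IsUnit (A * x * B)) :
    (A * x).rank = k ∧ rowSpace (A * x) = rng x := by
  have h1 : k ≤ (A * x).rank := by
    calc k = (A * x * B).rank := by rw [Matrix.rank_of_isUnit _ hu, Fintype.card_fin]
      _ ≤ (A * x).rank := Matrix.rank_mul_le_left _ _
  have h2 : (A * x).rank ≤ x.rank := Matrix.rank_mul_le_right _ _
  have hrk : (A * x).rank = k := by omega
  refine ⟨hrk, ?_⟩
  have hle : rowSpace (A * x) ≤ rowSpace x := rowSpace_mul_le A x
  have := Submodule.eq_of_le_of_finrank_eq hle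
    (by rw [finrank_rowSpace, finrank_rowSpace, hrk, hx])
  exact this

/-- Properties of `1 - x g` where `g = B (A x B)⁻¹ A` is a generalized inverse of `x`. -/
lemma nulProj {k n : ℕ} {A : Matrix (Fin k) (Fin n) ℂ} {B : Matrix (Fin n) (Fin k) ℂ}
    {x : Mn n} (hx : x.rank = k) (hu : IsUnit (A * x * B)) :
    (1 - x * (B * (A * x * B)⁻¹ * A)) * x = 0 ∧
      n ≤ (1 - x * (B * (A * x * B)⁻¹ * A)).rank + k := by
  set g : Mn n := B * (A * x * B)⁻¹ * A with hg
  have hWx : (1 - x * g) * x = 0 := by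
    have h1 : x * g * x = x := geninv (le_of_eq hx) hu
    rw [Matrix.sub_mul, Matrix.one_mul, h1, sub_self]
  refine ⟨hWx, ?_⟩
  have hxg : (x * g).rank ≤ k := by
    calc (x * g).rank ≤ g.rank := Matrix.rank_mul_le_right _ _
      _ ≤ (B * (A * x * B)⁻¹).rank := Matrix.rank_mul_le_left _ _
      _ ≤ k := by
          have := Matrix.rank_le_card_width (B * (A * x * B)⁻¹)
          rwa [Fintype.card_fin] at this
  have hone : (1 : Mn n) = (1 - x * g) + x * g := by rw [sub_add_cancel]
  have h1 : (1 : Mn n).rank = n := by rw [Matrix.rank_one, Fintype.card_fin]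
  have hsum : n ≤ (1 - x * g).rank + (x * g).rank := by
    calc n = (1 : Mn n).rank := h1.symm
      _ = ((1 - x * g) + x * g).rank := by rw [← hone]
      _ ≤ (1 - x * g).rank + (x * g).rank := rank_add_le' _ _
  omega

/-- Compression of the null-space projector to an `(n-k) × n` matrix. -/
lemma nulComp {k n : ℕ} {A : Matrix (Fin k) (Fin n) ℂ} {B : Matrix (Fin n) (Fin k) ℂ}
    {A' : Matrix (Fin (n - k)) (Fin n) ℂ} {B' : Matrix (Fin n) (Fin (n - k)) ℂ}
    {x : Mn n} (hx : x.rank = k) (hu : IsUnit (A * x * B))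
    (hu' : IsUnit (A' * (1 - x * (B * (A * x * B)⁻¹ * A)) * B')) :
    (A' * (1 - x * (B * (A * x * B)⁻¹ * A))).rank = n - k ∧
      rowSpace (A' * (1 - x * (B * (A * x * B)⁻¹ * A))) = nul x := by
  set W : Mn n := 1 - x * (B * (A * x * B)⁻¹ * A) with hW
  have hWx : W * x = 0 := (nulProj hx hu).1
  have h1 : n - k ≤ (A' * W).rank := by
    calc n - k = (A' * W * B').rank := by rw [Matrix.rank_of_isUnit _ hu', Fintype.card_fin]
      _ ≤ (A' * W).rank := Matrix.rank_mul_le_left _ _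
  have h2 : (A' * W).rank ≤ n - k := by
    have := Matrix.rank_le_card_height (A' * W)
    rwa [Fintype.card_fin] at this
  have hrk : (A' * W).rank = n - k := by omega
  refine ⟨hrk, ?_⟩
  have hzero : (A' * W) * x = 0 := by rw [Matrix.mul_assoc, hWx, Matrix.mul_zero]
  have hle : rowSpace (A' * W) ≤ nul x := rowSpace_le_nul hzero
  have hnul : finrank ℂ ↥(nul x) = n - k := by
    have := rank_add_finrank_nul x
    omega
  exact Submodule.eq_of_le_of_finrank_eq hle (by rw [finrank_rowSpace, hrk, hnul])

-- Grassmannian topology lemmas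
lemma grass_q_mem {n m : ℕ} (P : {P : Matrix (Fin m) (Fin n) ℂ // P.rank = m}) :
    toGrass m (rowSpace P.1) ∈ GrassSet n m := by
  show finrank ℂ ↥(rowSpace P.1) = m
  rw [finrank_rowSpace]
  exact P.2

lemma continuous_grass_q {n m : ℕ} :
    Continuous (fun P : {P : Matrix (Fin m) (Fin n) ℂ // P.rank = m} =>
      toGrass m (rowSpace P.1)) :=
  continuous_coinduced_rng

lemma isOpen_grass_of_preimage {n m : ℕ} {S : Set (GrassModK n m)}
    (hS : IsOpen ((fun P : {P : Matrix (Fin m) (Fin n) ℂ // P.rank = m} =>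
      toGrass m (rowSpace P.1)) ⁻¹' S)) :
    IsOpen (Subtype.val ⁻¹' S : Set ↥(GrassSet n m)) := by
  have hT : IsOpen (S ∪ (GrassSet n m)ᶜ) := by
    have hpre : (fun P : {P : Matrix (Fin m) (Fin n) ℂ // P.rank = m} =>
        toGrass m (rowSpace P.1)) ⁻¹' (S ∪ (GrassSet n m)ᶜ) =
        (fun P : {P : Matrix (Fin m) (Fin n) ℂ // P.rank = m} =>
        toGrass m (rowSpace P.1)) ⁻¹' S := by
      ext P
      simp only [Set.mem_preimage, Set.mem_union, Set.mem_compl_iff]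
      constructor
      · rintro (h | h)
        · exact h
        · exact absurd (grass_q_mem P) h
      · exact fun h => Or.inl h
    exact isOpen_coinduced.mpr (hpre ▸ hS)
  have heq : (Subtype.val ⁻¹' (S ∪ (GrassSet n m)ᶜ) : Set ↥(GrassSet n m)) =
      Subtype.val ⁻¹' S := by
    ext W
    simp only [Set.mem_preimage, Set.mem_union, Set.mem_compl_iff]
    constructor
    · rintro (h | h)
      · exact h
      · exact absurd W.2 h
    · exact fun h => Or.inl h
  rw [← heq]
  exact hT.preimage continuous_subtype_val

lemma ContinuousAt.matrix_mul' {X : Type*} [TopologicalSpace X] {a b c : ℕ}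
    {f : X → Matrix (Fin a) (Fin b) ℂ} {g : X → Matrix (Fin b) (Fin c) ℂ} {x : X}
    (hf : ContinuousAt f x) (hg : ContinuousAt g x) :
    ContinuousAt (fun y => f y * g y) x := by
  have h1 : Continuous (fun p : Matrix (Fin a) (Fin b) ℂ × Matrix (Fin b) (Fin c) ℂ => p.1 * p.2) :=
    continuous_fst.matrix_mul continuous_snd
  exact h1.continuousAt.comp (hf.prodMk hg)

lemma ContinuousAt.matrix_det' {X : Type*} [TopologicalSpace X] {a : ℕ}
    {f : X → Matrix (Fin a) (Fin a) ℂ} {x : X} (hf : ContinuousAt f x) :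
    ContinuousAt (fun y => (f y).det) x :=
  ((continuous_id.matrix_det).continuousAt).comp hf

end GrassAux

open Matrix Module Submodule Set Topology
open scoped ComplexOrder

/-- For `1 ≤ k ≤ n - 1`, the maps `Γ_k : D_k → 𝖦_k, x ↦ rng x` and
`Δ_k : D_k → 𝖦_{n-k}, x ↦ nul x` (on the set `D_k` of rank-`k` matrices with the
euclidean subspace topology) are continuous open surjections. -/
theorem stmt_8 {n k : ℕ} (hk1 : 1 ≤ k) (hk2 : k ≤ n - 1) :
    (Continuous (fun x : {x : Mn n // x.rank = k} => toGrass k (rng x.1)) ∧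
     Set.range (fun x : {x : Mn n // x.rank = k} => toGrass k (rng x.1)) = GrassSet n k ∧
     ∀ U : Set {x : Mn n // x.rank = k}, IsOpen U →
       IsOpen (Subtype.val ⁻¹'
         ((fun x : {x : Mn n // x.rank = k} => toGrass k (rng x.1)) '' U) :
           Set ↥(GrassSet n k))) ∧
    (Continuous (fun x : {x : Mn n // x.rank = k} => toGrass (n - k) (nul x.1)) ∧
     Set.range (fun x : {x : Mn n // x.rank = k} => toGrass (n - k) (nul x.1))
       = GrassSet n (n - k) ∧
     ∀ U : Set {x : Mn n // x.rank = k}, IsOpen U →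
       IsOpen (Subtype.val ⁻¹'
         ((fun x : {x : Mn n // x.rank = k} => toGrass (n - k) (nul x.1)) '' U) :
           Set ↥(GrassSet n (n - k)))) := by
  classical
  have hkn : k ≤ n := by omega
  constructor
  -- ############ Γ_k : x ↦ rng x ############
  · refine ⟨?_, ?_, ?_⟩
    -- ### continuity ###
    · rw [continuous_iff_continuousAt]
      intro x₀
      obtain ⟨A, B, hAB⟩ := exists_isUnit_mul_mul (le_of_eq x₀.2.symm)
      set f : {x : Mn n // x.rank = k} → {P : Matrix (Fin k) (Fin n) ℂ // P.rank = k} :=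
        fun x => if h : (A * x.1).rank = k then ⟨A * x.1, h⟩
          else ⟨A * x₀.1, (rowComp x₀.2 hAB).1⟩ with hf
      have hdetc : ContinuousAt
          (fun x : {x : Mn n // x.rank = k} => (A * x.1 * B).det) x₀ :=
        (((continuous_const.matrix_mul continuous_subtype_val).matrix_mul
          continuous_const).matrix_det).continuousAt
      have hdet0 : (A * x₀.1 * B).det ≠ 0 :=
        isUnit_iff_ne_zero.mp ((Matrix.isUnit_iff_isUnit_det _).mp hAB)
      have hev : ∀ᶠ x : {x : Mn n // x.rank = k} in nhds x₀, IsUnit (A * x.1 * B) := by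
        filter_upwards [hdetc.eventually_ne hdet0] with x hx
        exact (Matrix.isUnit_iff_isUnit_det _).mpr (isUnit_iff_ne_zero.mpr hx)
      have hfc : ContinuousAt f x₀ := by
        have hc : ContinuousAt (fun x : {x : Mn n // x.rank = k} => A * x.1) x₀ :=
          (continuous_const.matrix_mul continuous_subtype_val).continuousAt
        have hvf : ContinuousAt (Subtype.val ∘ f) x₀ := by
          apply hc.congr
          filter_upwards [hev] with x hx
          simp only [Function.comp_apply, hf, dif_pos (rowComp x.2 hx).1]
        exact IsInducing.subtypeVal.continuousAt_iff.mpr hvf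
      have hqf : ContinuousAt (fun x => toGrass k (rowSpace (f x).1)) x₀ :=
        ContinuousAt.comp (f := f)
          (g := fun P : {P : Matrix (Fin k) (Fin n) ℂ // P.rank = k} =>
            toGrass k (rowSpace P.1))
          (continuous_grass_q.continuousAt) hfc
      apply hqf.congr
      filter_upwards [hev] with x hx
      have h1 : rowSpace (f x).1 = rng x.1 := by
        simp only [hf, dif_pos (rowComp x.2 hx).1]
        exact (rowComp x.2 hx).2
      rw [h1]
    -- ### surjectivity ###
    · ext W
      constructor
      · rintro ⟨x, rfl⟩
        show finrank ℂ ↥(rng x.1) = k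
        rw [show rng x.1 = rowSpace x.1 from rfl, finrank_rowSpace, x.2]
      · intro hW
        obtain ⟨P, hP, hPr⟩ := exists_rowSpace_eq (toSubmodule W) hW
        have hxr : (Pᴴ * P).rank = k := by
          rw [Matrix.rank_conjTranspose_mul_self]; exact hPr
        refine ⟨⟨Pᴴ * P, hxr⟩, ?_⟩
        show toGrass k (rng (Pᴴ * P)) = W
        have h1 : rng (Pᴴ * P) = toSubmodule W := by
          rw [← hP]
          exact Submodule.eq_of_le_of_finrank_eq (rowSpace_mul_le _ _)
            (by rw [show rng (Pᴴ * P) = rowSpace (Pᴴ * P) from rfl,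
              finrank_rowSpace, finrank_rowSpace, hxr, hPr])
        exact h1
    -- ### openness ###
    · intro U hU
      apply isOpen_grass_of_preimage
      obtain ⟨V', hV'open, hV'⟩ := isOpen_induced_iff.mp hU
      rw [isOpen_iff_mem_nhds]
      rintro P₀ ⟨x, hxU, hx⟩
      have hx' : rng x.1 = rowSpace P₀.1 := hx
      have hle : LinearMap.range (x.1)ᵀ.mulVecLin ≤ LinearMap.range (P₀.1)ᵀ.mulVecLin :=
        le_of_eq hx'
      obtain ⟨E, hE⟩ := exists_factor hle
      set C : Matrix (Fin n) (Fin k) ℂ := Eᵀ with hC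
      have hxC : x.1 = C * P₀.1 := by
        have h1 := congrArg Matrix.transpose hE
        rwa [transpose_transpose, transpose_mul, transpose_transpose] at h1
      have hNopen : IsOpen (Subtype.val ⁻¹'
          {M : Matrix (Fin k) (Fin n) ℂ | k ≤ (C * M).rank ∧ C * M ∈ V'} :
          Set {P : Matrix (Fin k) (Fin n) ℂ // P.rank = k}) := by
        apply IsOpen.preimage continuous_subtype_val
        have hφ : Continuous fun M : Matrix (Fin k) (Fin n) ℂ => C * M :=
          continuous_const.matrix_mul continuous_id
        exact (isOpen_le_rank.inter hV'open).preimage hφ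
      have hP₀N : P₀ ∈ (Subtype.val ⁻¹'
          {M : Matrix (Fin k) (Fin n) ℂ | k ≤ (C * M).rank ∧ C * M ∈ V'} :
          Set {P : Matrix (Fin k) (Fin n) ℂ // P.rank = k}) := by
        constructor
        · rw [← hxC, x.2]
        · rw [← hxC, ← Set.mem_preimage, hV']
          exact hxU
      refine Filter.mem_of_superset (hNopen.mem_nhds hP₀N) ?_
      rintro P' ⟨h1, h2⟩
      have hrkC : C.rank ≤ k := by
        have := Matrix.rank_le_card_width C
        rwa [Fintype.card_fin] at this
      have hrk : (C * P'.1).rank = k := by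
        have h3 : (C * P'.1).rank ≤ C.rank := Matrix.rank_mul_le_left _ _
        omega
      refine ⟨⟨C * P'.1, hrk⟩, ?_, ?_⟩
      · rw [← hV']
        exact h2
      · show toGrass k (rng (C * P'.1)) = toGrass k (rowSpace P'.1)
        have h4 : rng (C * P'.1) = rowSpace P'.1 :=
          Submodule.eq_of_le_of_finrank_eq (rowSpace_mul_le _ _)
            (by rw [show rng (C * P'.1) = rowSpace (C * P'.1) from rfl,
              finrank_rowSpace, finrank_rowSpace, hrk, P'.2])
        exact congrArg (toGrass k) h4
  -- ############ Δ_k : x ↦ nul x ############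
  · refine ⟨?_, ?_, ?_⟩
    -- ### continuity ###
    · rw [continuous_iff_continuousAt]
      intro x₀
      obtain ⟨A, B, hAB⟩ := exists_isUnit_mul_mul (le_of_eq x₀.2.symm)
      set Wf : {x : Mn n // x.rank = k} → Mn n :=
        fun x => 1 - x.1 * (B * (A * x.1 * B)⁻¹ * A) with hWf
      -- existence of a compression for W(x₀)
      have hWrank : n - k ≤ (Wf x₀).rank := by
        have h0 := (nulProj x₀.2 hAB).2
        have h2 : Wf x₀ = 1 - x₀.1 * (B * (A * x₀.1 * B)⁻¹ * A) := rfl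
        rw [h2]
        omega
      obtain ⟨A', B', hA'B'⟩ := exists_isUnit_mul_mul hWrank
      set f : {x : Mn n // x.rank = k} →
          {P : Matrix (Fin (n - k)) (Fin n) ℂ // P.rank = n - k} :=
        fun x => if h : (A' * Wf x).rank = n - k then ⟨A' * Wf x, h⟩
          else ⟨A' * Wf x₀, (nulComp x₀.2 hAB hA'B').1⟩ with hf
      -- continuity of Wf at x₀
      have hdet0 : (A * x₀.1 * B).det ≠ 0 :=
        isUnit_iff_ne_zero.mp ((Matrix.isUnit_iff_isUnit_det _).mp hAB)
      have hAxB : ContinuousAt (fun x : {x : Mn n // x.rank = k} => A * x.1 * B) x₀ :=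
        ((continuous_const.matrix_mul continuous_subtype_val).matrix_mul
          continuous_const).continuousAt
      have hinv : ContinuousAt (fun x : {x : Mn n // x.rank = k} => (A * x.1 * B)⁻¹) x₀ := by
        have hri : ContinuousAt Ring.inverse ((A * x₀.1 * B).det) := by
          rw [Ring.inverse_eq_inv']
          exact continuousAt_inv₀ hdet0
        exact ContinuousAt.comp (f := fun x : {x : Mn n // x.rank = k} => A * x.1 * B)
          (g := Inv.inv) (continuousAt_matrix_inv _ hri) hAxB
      have hWc : ContinuousAt Wf x₀ :=
        continuousAt_const.sub
          (ContinuousAt.matrix_mul' continuous_subtype_val.continuousAt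
            (ContinuousAt.matrix_mul'
              (ContinuousAt.matrix_mul' continuousAt_const hinv) continuousAt_const))
      have hN'c : ContinuousAt (fun x : {x : Mn n // x.rank = k} => A' * Wf x) x₀ :=
        ContinuousAt.matrix_mul' continuousAt_const hWc
      -- eventually both determinant conditions hold
      have hdetc : ContinuousAt
          (fun x : {x : Mn n // x.rank = k} => (A * x.1 * B).det) x₀ :=
        hAxB.matrix_det'
      have hdetc2 : ContinuousAt
          (fun x : {x : Mn n // x.rank = k} => (A' * Wf x * B').det) x₀ :=
        (ContinuousAt.matrix_mul' hN'c continuousAt_const).matrix_det'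
      have hdet20 : (A' * Wf x₀ * B').det ≠ 0 :=
        isUnit_iff_ne_zero.mp ((Matrix.isUnit_iff_isUnit_det _).mp hA'B')
      have hev : ∀ᶠ x : {x : Mn n // x.rank = k} in nhds x₀,
          IsUnit (A * x.1 * B) ∧ IsUnit (A' * Wf x * B') := by
        filter_upwards [hdetc.eventually_ne hdet0, hdetc2.eventually_ne hdet20] with x h1 h2
        exact ⟨(Matrix.isUnit_iff_isUnit_det _).mpr (isUnit_iff_ne_zero.mpr h1),
          (Matrix.isUnit_iff_isUnit_det _).mpr (isUnit_iff_ne_zero.mpr h2)⟩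
      have hfc : ContinuousAt f x₀ := by
        have hvf : ContinuousAt (Subtype.val ∘ f) x₀ := by
          apply hN'c.congr
          filter_upwards [hev] with x hx
          have hr : (A' * Wf x).rank = n - k := (nulComp x.2 hx.1 hx.2).1
          simp only [Function.comp_apply, hf, dif_pos hr]
        exact IsInducing.subtypeVal.continuousAt_iff.mpr hvf
      have hqf : ContinuousAt (fun x => toGrass (n - k) (rowSpace (f x).1)) x₀ :=
        ContinuousAt.comp (f := f)
          (g := fun P : {P : Matrix (Fin (n - k)) (Fin n) ℂ // P.rank = n - k} =>
            toGrass (n - k) (rowSpace P.1))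
          (continuous_grass_q.continuousAt) hfc
      apply hqf.congr
      filter_upwards [hev] with x hx
      have h1 : rowSpace (f x).1 = nul x.1 := by
        have hr : (A' * Wf x).rank = n - k := (nulComp x.2 hx.1 hx.2).1
        simp only [hf, dif_pos hr]
        exact (nulComp x.2 hx.1 hx.2).2
      rw [h1]
    -- ### surjectivity ###
    · ext W
      constructor
      · rintro ⟨x, rfl⟩
        show finrank ℂ ↥(nul x.1) = n - k
        have := rank_add_finrank_nul x.1
        have hx := x.2
        omega
      · intro hW
        obtain ⟨P, hP, hPr⟩ := exists_rowSpace_eq (toSubmodule W) hW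
        obtain ⟨B₂, hB₂⟩ := exists_isUnit_mul_right hPr
        obtain ⟨hPV, hrankV, hrange⟩ := kerProj hPr hB₂
        set V : Mn n := 1 - B₂ * (P * B₂)⁻¹ * P with hV
        have hVrank : V.rank = k := by
          rw [hrankV]
          omega
        refine ⟨⟨V, hVrank⟩, ?_⟩
        show toGrass (n - k) (nul V) = W
        have h1 : nul V = toSubmodule W := by
          rw [← hP]
          have hle : rowSpace P ≤ nul V := rowSpace_le_nul hPV
          have h2 : finrank ℂ ↥(nul V) = n - k := by
            have := rank_add_finrank_nul V
            omega
          exact (Submodule.eq_of_le_of_finrank_eq hle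
            (by rw [finrank_rowSpace, hPr, h2])).symm
        exact h1
    -- ### openness ###
    · intro U hU
      apply isOpen_grass_of_preimage
      obtain ⟨V', hV'open, hV'⟩ := isOpen_induced_iff.mp hU
      rw [isOpen_iff_mem_nhds]
      rintro P₀ ⟨x, hxU, hx⟩
      have hx' : nul x.1 = rowSpace P₀.1 := hx
      obtain ⟨B₂, hB₂⟩ := exists_isUnit_mul_right P₀.2
      obtain ⟨hPV, hrankV, hrange⟩ := kerProj P₀.2 hB₂
      -- x = V(P₀) * E
      have hPx : P₀.1 * x.1 = 0 := mul_eq_zero_of_rowSpace_le_nul (le_of_eq hx'.symm)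
      have hxker : LinearMap.range (x.1).mulVecLin ≤
          LinearMap.range (1 - B₂ * (P₀.1 * B₂)⁻¹ * P₀.1).mulVecLin := by
        rw [hrange]
        exact range_le_ker_of_mul_eq_zero hPx
      obtain ⟨E, hE⟩ := exists_factor hxker
      -- the local continuous section P ↦ (1 - B₂ (P B₂)⁻¹ P) E
      set φ : Matrix (Fin (n - k)) (Fin n) ℂ → Mn n :=
        fun M => (1 - B₂ * (M * B₂)⁻¹ * M) * E with hφ
      have hφP₀ : φ P₀.1 = x.1 := hE.symm
      -- open neighbourhood
      have hφcont : ∀ M : Matrix (Fin (n - k)) (Fin n) ℂ, (M * B₂).det ≠ 0 →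
          ContinuousAt φ M := by
        intro M hM
        have hMB : ContinuousAt (fun M' : Matrix (Fin (n - k)) (Fin n) ℂ => M' * B₂) M :=
          (continuous_id.matrix_mul continuous_const).continuousAt
        have hinv : ContinuousAt
            (fun M' : Matrix (Fin (n - k)) (Fin n) ℂ => (M' * B₂)⁻¹) M := by
          have hri : ContinuousAt Ring.inverse ((M * B₂).det) := by
            rw [Ring.inverse_eq_inv']
            exact continuousAt_inv₀ hM
          exact ContinuousAt.comp (f := fun M' : Matrix (Fin (n - k)) (Fin n) ℂ => M' * B₂)
            (g := Inv.inv) (continuousAt_matrix_inv _ hri) hMB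
        exact ContinuousAt.matrix_mul'
          (continuousAt_const.sub (ContinuousAt.matrix_mul'
            (ContinuousAt.matrix_mul' continuousAt_const hinv) continuousAt_id))
          continuousAt_const
      have hsopen : IsOpen {M : Matrix (Fin (n - k)) (Fin n) ℂ | (M * B₂).det ≠ 0} := by
        have hc : Continuous fun M : Matrix (Fin (n - k)) (Fin n) ℂ => (M * B₂).det :=
          (continuous_id.matrix_mul continuous_const).matrix_det
        exact IsOpen.preimage hc isOpen_compl_singleton
      have hNopen : IsOpen (Subtype.val ⁻¹'
          ({M : Matrix (Fin (n - k)) (Fin n) ℂ | (M * B₂).det ≠ 0} ∩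
            φ ⁻¹' ({y : Mn n | k ≤ y.rank} ∩ V')) :
          Set {P : Matrix (Fin (n - k)) (Fin n) ℂ // P.rank = n - k}) := by
        apply IsOpen.preimage continuous_subtype_val
        apply ContinuousOn.isOpen_inter_preimage ?_ hsopen (isOpen_le_rank.inter hV'open)
        intro M hM
        exact (hφcont M hM).continuousWithinAt
      have hP₀N : P₀ ∈ (Subtype.val ⁻¹'
          ({M : Matrix (Fin (n - k)) (Fin n) ℂ | (M * B₂).det ≠ 0} ∩
            φ ⁻¹' ({y : Mn n | k ≤ y.rank} ∩ V')) :
          Set {P : Matrix (Fin (n - k)) (Fin n) ℂ // P.rank = n - k}) := by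
        refine ⟨isUnit_iff_ne_zero.mp hB₂, ?_, ?_⟩
        · rw [hφ]
          show k ≤ ((1 - B₂ * (P₀.1 * B₂)⁻¹ * P₀.1) * E).rank
          rw [show (1 - B₂ * (P₀.1 * B₂)⁻¹ * P₀.1) * E = x.1 from hE.symm, x.2]
        · show φ P₀.1 ∈ V'
          rw [hφP₀, ← Set.mem_preimage, hV']
          exact hxU
      refine Filter.mem_of_superset (hNopen.mem_nhds hP₀N) ?_
      rintro P' ⟨hdet, hrk1, hV'mem⟩
      -- properties of x' = φ P'
      obtain ⟨hPV', hrankV', hrange'⟩ := kerProj P'.2 (isUnit_iff_ne_zero.mpr hdet)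
      have hrk2 : (φ P'.1).rank ≤ k := by
        have h3 : (φ P'.1).rank ≤ (1 - B₂ * (P'.1 * B₂)⁻¹ * P'.1).rank :=
          Matrix.rank_mul_le_left _ _
        have h4 : (1 - B₂ * (P'.1 * B₂)⁻¹ * P'.1).rank = n - (n - k) := hrankV'
        omega
      have hrk : (φ P'.1).rank = k := le_antisymm hrk2 hrk1
      refine ⟨⟨φ P'.1, hrk⟩, ?_, ?_⟩
      · rw [← hV']
        exact hV'mem
      · show toGrass (n - k) (nul (φ P'.1)) = toGrass (n - k) (rowSpace P'.1)
        have hzero : P'.1 * φ P'.1 = 0 := by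
          rw [hφ]
          show P'.1 * ((1 - B₂ * (P'.1 * B₂)⁻¹ * P'.1) * E) = 0
          rw [← Matrix.mul_assoc, hPV', Matrix.zero_mul]
        have hle2 : rowSpace P'.1 ≤ nul (φ P'.1) := rowSpace_le_nul hzero
        have hnul : finrank ℂ ↥(nul (φ P'.1)) = n - k := by
          have := rank_add_finrank_nul (φ P'.1)
          omega
        have h4 : rowSpace P'.1 = nul (φ P'.1) :=
          Submodule.eq_of_le_of_finrank_eq hle2 (by rw [finrank_rowSpace, P'.2, hnul])
        exact congrArg (toGrass (n - k)) h4.symm
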